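/- With matching weights w_i^s = 1(t_i*=s) + 1(t_i*=∞)·K_M(i,s)/M (and weight zero for all other cohorts), the weighted 2WFE estimator equals the matched DiD form: τ̂(w^s,λ) = (1/N_s) Σ_i [1(t_i*=s) − 1(t_i*=∞)K_M(i,s)/M]·(Ȳ_i^{post,s}(λ) − Ȳ_i^{pre,s}(λ)), where Ȳ_i^{post,s}(λ) = Σ_{t≥s} λ_t Y_{it}/Σ_{t≥s} λ_t and Ȳ_i^{pre,s}(λ) = Σ_{t<s} λ_t Y_{it}/Σ_{t<s} λ_t. -/

import Mathlib

open Finset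

noncomputable section

/-- Treatment indicator `D_{it} = 1(t ≥ t_i*)`. -/
def Dit {n : ℕ} (tstar : Fin n → ℕ∞) (i : Fin n) (t : ℕ) : ℝ :=
  if tstar i ≤ (t : ℕ∞) then 1 else 0

/-- Unit-level λ-weighted mean of treatment: `D̄_i`. -/
def DbarI {n : ℕ} (T : ℕ) (lam : ℕ → ℝ) (tstar : Fin n → ℕ∞) (i : Fin n) : ℝ :=
  (∑ t ∈ Finset.Icc 1 T, lam t * Dit tstar i t) / (∑ t ∈ Finset.Icc 1 T, lam t)

/-- Period-level w-weighted mean of treatment: `D̃_t`. -/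
def DtildeT {n : ℕ} (w : Fin n → ℝ) (tstar : Fin n → ℕ∞) (t : ℕ) : ℝ :=
  (∑ i, w i * Dit tstar i t) / (∑ i, w i)

/-- Overall weighted mean of treatment: `D̄`. -/
def Dbar {n : ℕ} (T : ℕ) (w : Fin n → ℝ) (lam : ℕ → ℝ) (tstar : Fin n → ℕ∞) : ℝ :=
  (∑ i, ∑ t ∈ Finset.Icc 1 T, w i * lam t * Dit tstar i t) /
    ((∑ i, w i) * (∑ t ∈ Finset.Icc 1 T, lam t))

/-- Demeaned treatment `D̈_{it} = D_{it} − D̄_i − D̃_t + D̄`. -/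
def Ddot {n : ℕ} (T : ℕ) (w : Fin n → ℝ) (lam : ℕ → ℝ) (tstar : Fin n → ℕ∞)
    (i : Fin n) (t : ℕ) : ℝ :=
  Dit tstar i t - DbarI T lam tstar i - DtildeT w tstar t + Dbar T w lam tstar

/-- Weighted cohort share `p̂_c^w` (cohort `c ∈ ℕ∞`, with `⊤` the never treated). -/
def phat {n : ℕ} (w : Fin n → ℝ) (tstar : Fin n → ℕ∞) (c : ℕ∞) : ℝ :=
  (∑ i, w i * (if tstar i = c then 1 else 0)) / (∑ i, w i)

/-- Share of included periods `t ≥ u`: `Λ_u`. -/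
def Lam (T : ℕ) (lam : ℕ → ℝ) (u : ℕ) : ℝ :=
  (∑ t ∈ Finset.Icc 1 T, lam t * (if u ≤ t then 1 else 0)) / (∑ t ∈ Finset.Icc 1 T, lam t)

/-- Weighted two-way fixed effects estimator `τ̂(w, λ)`. -/
def tauhat {n : ℕ} (T : ℕ) (w : Fin n → ℝ) (lam : ℕ → ℝ) (tstar : Fin n → ℕ∞)
    (Y : Fin n → ℕ → ℝ) : ℝ :=
  (∑ i, ∑ t ∈ Finset.Icc 1 T, w i * lam t * Y i t * Ddot T w lam tstar i t) /
    (∑ i, ∑ t ∈ Finset.Icc 1 T, w i * lam t * Dit tstar i t * Ddot T w lam tstar i t)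

end

/-- With matching weights
`w_i^s = 1(t_i* = s) + 1(t_i* = ∞) K_M(i,s)/M`, the weighted 2WFE estimator equals
the matched DiD form
`(1/N_s) Σ_i [1(t_i* = s) − 1(t_i* = ∞) K_M(i,s)/M]·(Ȳ_i^{post,s}(λ) − Ȳ_i^{pre,s}(λ))`. -/
theorem statement5 {n T : ℕ} (s M : ℕ) (lam : ℕ → ℝ) (tstar : Fin n → ℕ∞)
    (Y : Fin n → ℕ → ℝ) (K : Fin n → ℕ)
    (hs : s ∈ Finset.Icc 2 T) (hM : 1 ≤ M)
    (hNs : 0 < (Finset.univ.filter (fun i => tstar i = (s : ℕ∞))).card)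
    (hK : (∑ i, if tstar i = ⊤ then K i else 0)
      = (Finset.univ.filter (fun i => tstar i = (s : ℕ∞))).card * M)
    (hlam : ∀ t, lam t = 0 ∨ lam t = 1)
    (hpost : 0 < ∑ t ∈ Finset.Icc s T, lam t)
    (hpre : 0 < ∑ t ∈ Finset.Icc 1 (s - 1), lam t) :
    tauhat T
        (fun i => (if tstar i = (s : ℕ∞) then (1 : ℝ) else 0)
          + (if tstar i = ⊤ then (K i : ℝ) / M else 0))
        lam tstar Y
      = (1 / ((Finset.univ.filter (fun i => tstar i = (s : ℕ∞))).card : ℝ)) *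
          ∑ i, ((if tstar i = (s : ℕ∞) then (1 : ℝ) else 0)
              - (if tstar i = ⊤ then (K i : ℝ) / M else 0)) *
            ((∑ t ∈ Finset.Icc s T, lam t * Y i t) / (∑ t ∈ Finset.Icc s T, lam t)
              - (∑ t ∈ Finset.Icc 1 (s - 1), lam t * Y i t) /
                  (∑ t ∈ Finset.Icc 1 (s - 1), lam t)) := by
  classical
  obtain ⟨hs2, hsT⟩ := Finset.mem_Icc.mp hs
  set Ns : ℝ := ((Finset.univ.filter (fun i => tstar i = (s : ℕ∞))).card : ℝ) with hNsdef
  set A : ℝ := ∑ t ∈ Finset.Icc s T, lam t with hAdef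
  set B : ℝ := ∑ t ∈ Finset.Icc 1 (s - 1), lam t with hBdef
  set w : Fin n → ℝ := fun i => (if tstar i = (s : ℕ∞) then (1 : ℝ) else 0)
          + (if tstar i = ⊤ then (K i : ℝ) / M else 0) with hw
  clear_value Ns A B w
  have hNsR : 0 < Ns := by rw [hNsdef]; exact_mod_cast hNs
  have hNs0 : Ns ≠ 0 := ne_of_gt hNsR
  have hM0 : (M : ℝ) ≠ 0 := Nat.cast_ne_zero.mpr (by omega)
  have hA0 : A ≠ 0 := ne_of_gt hpost
  have hB0 : B ≠ 0 := ne_of_gt hpre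
  have hL0 : B + A ≠ 0 := by positivity
  -- splitting the time index
  have hIcc : Finset.Icc 1 (s - 1) ∪ Finset.Icc s T = Finset.Icc 1 T := by
    have h1 : Finset.Icc 1 (s - 1) = Finset.Ico 1 s := by
      rw [← Finset.Ico_add_one_right_eq_Icc]; congr 1; omega
    have h2 : Finset.Icc s T = Finset.Ico s (T + 1) := (Finset.Ico_add_one_right_eq_Icc ..).symm
    have h3 : Finset.Icc 1 T = Finset.Ico 1 (T + 1) := (Finset.Ico_add_one_right_eq_Icc ..).symm
    rw [h1, h2, h3, Finset.Ico_union_Ico_eq_Ico (by omega) (by omega)]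
  have hdisj : Disjoint (Finset.Icc 1 (s - 1)) (Finset.Icc s T) := by
    simp only [Finset.disjoint_left, Finset.mem_Icc]
    intro a h1 h2; omega
  have hsplit : ∀ f : ℕ → ℝ, ∑ t ∈ Finset.Icc 1 T, f t
      = ∑ t ∈ Finset.Icc 1 (s - 1), f t + ∑ t ∈ Finset.Icc s T, f t := by
    intro f; rw [← hIcc, Finset.sum_union hdisj]
  have hLsum : ∑ t ∈ Finset.Icc 1 T, lam t = B + A := by
    rw [hBdef, hAdef]; exact hsplit lam
  have hchiA : ∑ t ∈ Finset.Icc 1 T, lam t * (if s ≤ t then (1:ℝ) else 0) = A := by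
    rw [hsplit]
    have h1 : ∑ t ∈ Finset.Icc 1 (s - 1), lam t * (if s ≤ t then (1:ℝ) else 0) = 0 := by
      apply Finset.sum_eq_zero; intro t ht
      have := Finset.mem_Icc.mp ht
      rw [if_neg (by omega)]; ring
    have h2 : ∑ t ∈ Finset.Icc s T, lam t * (if s ≤ t then (1:ℝ) else 0) = A := by
      rw [hAdef]; apply Finset.sum_congr rfl; intro t ht
      have := Finset.mem_Icc.mp ht
      rw [if_pos this.1]; ring
    rw [h1, h2]; ring
  -- Dit values
  have hDs : ∀ i, tstar i = (s:ℕ∞) → ∀ t : ℕ, Dit tstar i t = if s ≤ t then (1:ℝ) else 0 := by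
    intro i hi t
    simp only [Dit, hi, Nat.cast_le]
  have hDtop : ∀ i, tstar i = ⊤ → ∀ t : ℕ, Dit tstar i t = 0 := by
    intro i hi t; simp [Dit, hi]
  have hsne : (s:ℕ∞) ≠ ⊤ := by simp
  -- weights
  have hwprod : ∀ i t, w i * Dit tstar i t
      = (if tstar i = (s:ℕ∞) then (1:ℝ) else 0) * (if s ≤ t then (1:ℝ) else 0) := by
    intro i t
    by_cases h1 : tstar i = (s:ℕ∞)
    · have h2 : tstar i ≠ ⊤ := by rw [h1]; exact hsne
      rw [hw]; simp only [if_pos h1, if_neg h2, hDs i h1 t]; ring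
    · by_cases h2 : tstar i = ⊤
      · rw [hw]; simp only [if_neg h1, if_pos h2, hDtop i h2 t]; ring
      · rw [hw]; simp only [if_neg h1, if_neg h2]; ring
  have hNs_ind : ∑ i, (if tstar i = (s:ℕ∞) then (1:ℝ) else 0) = Ns := by
    rw [hNsdef]; simp [Finset.sum_boole]
  have hK' : ∑ i, (if tstar i = ⊤ then (K i:ℝ)/M else 0) = Ns := by
    have hc : ∑ i, (if tstar i = ⊤ then (K i:ℝ) else 0) = Ns * M := by
      have := congrArg (fun m : ℕ => (m : ℝ)) hK
      push_cast at this
      rw [hNsdef, ← this]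
    have : ∑ i, (if tstar i = ⊤ then (K i:ℝ)/M else 0)
        = (∑ i, if tstar i = ⊤ then (K i:ℝ) else 0) / M := by
      rw [Finset.sum_div]; apply Finset.sum_congr rfl; intro i _
      split <;> simp
    rw [this, hc]; field_simp
  have hSw : ∑ i, w i = 2 * Ns := by
    rw [hw, Finset.sum_add_distrib, hNs_ind, hK']; ring
  -- DtildeT
  have hDtilde : ∀ t : ℕ, DtildeT w tstar t = (if s ≤ t then (1:ℝ) else 0) / 2 := by
    intro t
    simp only [DtildeT]
    rw [Finset.sum_congr rfl (fun i _ => hwprod i t), ← Finset.sum_mul, hNs_ind, hSw,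
      mul_comm (2:ℝ) Ns, mul_div_mul_left _ _ hNs0]
  -- DbarI
  have hDbarI_s : ∀ i, tstar i = (s:ℕ∞) → DbarI T lam tstar i = A / (B + A) := by
    intro i hi
    have hnum : ∑ t ∈ Finset.Icc 1 T, lam t * Dit tstar i t = A := by
      rw [← hchiA]; apply Finset.sum_congr rfl; intro t _; rw [hDs i hi t]
    simp only [DbarI, hnum, hLsum]
  have hDbarI_top : ∀ i, tstar i = ⊤ → DbarI T lam tstar i = 0 := by
    intro i hi
    have hnum : ∑ t ∈ Finset.Icc 1 T, lam t * Dit tstar i t = 0 := by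
      apply Finset.sum_eq_zero; intro t _; rw [hDtop i hi t]; ring
    simp only [DbarI, hnum, zero_div]
  -- Dbar
  have hDbar : Dbar T w lam tstar = A / (2 * (B + A)) := by
    have hnum : ∑ i, ∑ t ∈ Finset.Icc 1 T, w i * lam t * Dit tstar i t = Ns * A := by
      have hper : ∀ i : Fin n, ∑ t ∈ Finset.Icc 1 T, w i * lam t * Dit tstar i t
          = (if tstar i = (s:ℕ∞) then (1:ℝ) else 0) * A := by
        intro i
        rw [← hchiA, Finset.mul_sum]
        apply Finset.sum_congr rfl; intro t _
        calc w i * lam t * Dit tstar i t = lam t * (w i * Dit tstar i t) := by ring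
        _ = _ := by rw [hwprod i t]; ring
      rw [Finset.sum_congr rfl (fun i _ => hper i), ← Finset.sum_mul, hNs_ind]
    simp only [Dbar, hnum, hSw, hLsum]
    field_simp <;> ring_nf
  -- Ddot values
  have hDd_s : ∀ i, tstar i = (s:ℕ∞) → ∀ t : ℕ,
      Ddot T w lam tstar i t = (if s ≤ t then (1:ℝ) else 0) / 2 - A / (2 * (B + A)) := by
    intro i hi t
    simp only [Ddot, hDs i hi t, hDbarI_s i hi, hDtilde t, hDbar]
    by_cases hst : s ≤ t
    · rw [if_pos hst]; field_simp; ring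
    · rw [if_neg hst]; field_simp; ring
  have hDd_top : ∀ i, tstar i = ⊤ → ∀ t : ℕ,
      Ddot T w lam tstar i t = -((if s ≤ t then (1:ℝ) else 0) / 2) + A / (2 * (B + A)) := by
    intro i hi t
    simp only [Ddot, hDtop i hi t, hDbarI_top i hi, hDtilde t, hDbar]
    by_cases hst : s ≤ t
    · rw [if_pos hst]; field_simp; ring
    · rw [if_neg hst]; field_simp; ring
  -- per-unit numerator
  have hnum_i : ∀ i : Fin n,
      ∑ t ∈ Finset.Icc 1 T, w i * lam t * Y i t * Ddot T w lam tstar i t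
      = ((if tstar i = (s:ℕ∞) then (1:ℝ) else 0) - (if tstar i = ⊤ then (K i:ℝ)/M else 0))
        * (B * (∑ t ∈ Finset.Icc s T, lam t * Y i t)
            - A * (∑ t ∈ Finset.Icc 1 (s - 1), lam t * Y i t)) / (2 * (B + A)) := by
    intro i
    rw [hsplit (fun t => w i * lam t * Y i t * Ddot T w lam tstar i t)]
    by_cases h1 : tstar i = (s:ℕ∞)
    · have h2 : tstar i ≠ ⊤ := by rw [h1]; exact hsne
      have hwi : w i = 1 := by rw [hw]; simp [h1, h2]
      have hpre' : ∑ t ∈ Finset.Icc 1 (s - 1), w i * lam t * Y i t * Ddot T w lam tstar i t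
          = (∑ t ∈ Finset.Icc 1 (s - 1), lam t * Y i t) * (-(A / (2 * (B + A)))) := by
        rw [Finset.sum_mul]
        apply Finset.sum_congr rfl; intro t ht
        have := Finset.mem_Icc.mp ht
        rw [hDd_s i h1 t, if_neg (by omega), hwi]; ring
      have hpost' : ∑ t ∈ Finset.Icc s T, w i * lam t * Y i t * Ddot T w lam tstar i t
          = (∑ t ∈ Finset.Icc s T, lam t * Y i t) * ((1:ℝ)/2 - A / (2 * (B + A))) := by
        rw [Finset.sum_mul]
        apply Finset.sum_congr rfl; intro t ht
        have := Finset.mem_Icc.mp ht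
        rw [hDd_s i h1 t, if_pos this.1, hwi]; ring
      rw [hpre', hpost', if_pos h1, if_neg h2]
      field_simp <;> ring_nf
    · by_cases h2 : tstar i = ⊤
      · have hwi : w i = (K i:ℝ)/M := by rw [hw]; simp [h1, h2]
        have hpre' : ∑ t ∈ Finset.Icc 1 (s - 1), w i * lam t * Y i t * Ddot T w lam tstar i t
            = (∑ t ∈ Finset.Icc 1 (s - 1), lam t * Y i t) * ((K i:ℝ)/M * (A / (2 * (B + A)))) := by
          rw [Finset.sum_mul]
          apply Finset.sum_congr rfl; intro t ht
          have := Finset.mem_Icc.mp ht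
          rw [hDd_top i h2 t, if_neg (by omega), hwi]; ring
        have hpost' : ∑ t ∈ Finset.Icc s T, w i * lam t * Y i t * Ddot T w lam tstar i t
            = (∑ t ∈ Finset.Icc s T, lam t * Y i t)
                * ((K i:ℝ)/M * (A / (2 * (B + A)) - 1/2)) := by
          rw [Finset.sum_mul]
          apply Finset.sum_congr rfl; intro t ht
          have := Finset.mem_Icc.mp ht
          rw [hDd_top i h2 t, if_pos this.1, hwi]; ring
        rw [hpre', hpost', if_neg h1, if_pos h2]
        field_simp <;> ring_nf
      · have hwi : w i = 0 := by rw [hw]; simp [h1, h2]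
        have z : ∀ (S : Finset ℕ), ∑ t ∈ S, w i * lam t * Y i t * Ddot T w lam tstar i t = 0 := by
          intro S; apply Finset.sum_eq_zero; intro t _; rw [hwi]; ring
        rw [z, z, if_neg h1, if_neg h2]; ring
  -- per-unit denominator
  have hden_i : ∀ i : Fin n,
      ∑ t ∈ Finset.Icc 1 T, w i * lam t * Dit tstar i t * Ddot T w lam tstar i t
      = (if tstar i = (s:ℕ∞) then (1:ℝ) else 0) * (A * B / (2 * (B + A))) := by
    intro i
    by_cases h1 : tstar i = (s:ℕ∞)
    · have h2 : tstar i ≠ ⊤ := by rw [h1]; exact hsne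
      have hwi : w i = 1 := by rw [hw]; simp [h1, h2]
      rw [hsplit (fun t => w i * lam t * Dit tstar i t * Ddot T w lam tstar i t)]
      have hpre' : ∑ t ∈ Finset.Icc 1 (s - 1), w i * lam t * Dit tstar i t * Ddot T w lam tstar i t
          = 0 := by
        apply Finset.sum_eq_zero; intro t ht
        have := Finset.mem_Icc.mp ht
        rw [hDs i h1 t, if_neg (by omega)]; ring
      have hpost' : ∑ t ∈ Finset.Icc s T, w i * lam t * Dit tstar i t * Ddot T w lam tstar i t
          = A * ((1:ℝ)/2 - A / (2 * (B + A))) := by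
        calc ∑ t ∈ Finset.Icc s T, w i * lam t * Dit tstar i t * Ddot T w lam tstar i t
            = ∑ t ∈ Finset.Icc s T, lam t * ((1:ℝ)/2 - A / (2 * (B + A))) := by
              apply Finset.sum_congr rfl; intro t ht
              have := Finset.mem_Icc.mp ht
              rw [hDs i h1 t, hDd_s i h1 t, if_pos this.1, hwi]; ring
          _ = A * ((1:ℝ)/2 - A / (2 * (B + A))) := by
              rw [← Finset.sum_mul, ← hAdef, mul_comm]
      rw [hpre', hpost', if_pos h1]
      field_simp <;> ring_nf
    · by_cases h2 : tstar i = ⊤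
      · have hz : ∑ t ∈ Finset.Icc 1 T, w i * lam t * Dit tstar i t * Ddot T w lam tstar i t
            = 0 := by
          apply Finset.sum_eq_zero; intro t _; rw [hDtop i h2 t]; ring
        rw [hz, if_neg h1]; ring
      · have hwi : w i = 0 := by rw [hw]; simp [h1, h2]
        have hz : ∑ t ∈ Finset.Icc 1 T, w i * lam t * Dit tstar i t * Ddot T w lam tstar i t
            = 0 := by
          apply Finset.sum_eq_zero; intro t _; rw [hwi]; ring
        rw [hz, if_neg h1]; ring
  -- assemble
  have hnum : ∑ i, ∑ t ∈ Finset.Icc 1 T, w i * lam t * Y i t * Ddot T w lam tstar i t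
      = (∑ i, ((if tstar i = (s:ℕ∞) then (1:ℝ) else 0) - (if tstar i = ⊤ then (K i:ℝ)/M else 0))
          * (B * (∑ t ∈ Finset.Icc s T, lam t * Y i t)
              - A * (∑ t ∈ Finset.Icc 1 (s - 1), lam t * Y i t))) / (2 * (B + A)) := by
    rw [Finset.sum_div]
    exact Finset.sum_congr rfl (fun i _ => hnum_i i)
  have hden : ∑ i, ∑ t ∈ Finset.Icc 1 T, w i * lam t * Dit tstar i t * Ddot T w lam tstar i t
      = Ns * (A * B / (2 * (B + A))) := by
    rw [Finset.sum_congr rfl (fun i _ => hden_i i), ← Finset.sum_mul, hNs_ind]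
  have hrhs : ∀ i : Fin n,
      ((if tstar i = (s:ℕ∞) then (1:ℝ) else 0) - (if tstar i = ⊤ then (K i:ℝ)/M else 0))
        * ((∑ t ∈ Finset.Icc s T, lam t * Y i t) / A
            - (∑ t ∈ Finset.Icc 1 (s - 1), lam t * Y i t) / B)
      = ((if tstar i = (s:ℕ∞) then (1:ℝ) else 0) - (if tstar i = ⊤ then (K i:ℝ)/M else 0))
          * (B * (∑ t ∈ Finset.Icc s T, lam t * Y i t)
              - A * (∑ t ∈ Finset.Icc 1 (s - 1), lam t * Y i t)) * (1 / (A * B)) := by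
    intro i; rw [div_sub_div _ _ hA0 hB0]; ring
  simp only [tauhat, hnum, hden]
  rw [Finset.sum_congr rfl (fun i _ => hrhs i), ← Finset.sum_mul]
  set C := ∑ i, ((if tstar i = (s:ℕ∞) then (1:ℝ) else 0) - (if tstar i = ⊤ then (K i:ℝ)/M else 0))
      * (B * (∑ t ∈ Finset.Icc s T, lam t * Y i t)
          - A * (∑ t ∈ Finset.Icc 1 (s - 1), lam t * Y i t)) with hC
  clear_value C
  field_simp
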